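/- Completely K-preserving maps are closed under composition: for all types a, b, c ∈ Ty, if M ∈ K(a → b) and N ∈ K(b → c), then the composite N ∘ M belongs to K(a → c). -/

import Mathlib

inductive Ty (Λ : Type) : Type
  | elem : List Λ → Ty Λ
  | arrow : Ty Λ → Ty Λ → Ty Λ

namespace Ty

variable {Λ : Type}

def ord : Ty Λ → ℕ
  | elem _ => 0
  | arrow a b => 1 + max a.ord b.ord

def par : Ty Λ → Ty Λ → Ty Λ
  | elem v, elem w => elem (v ++ w)
  | elem v, arrow c d => arrow c (par (elem v) d)
  | arrow a b, elem w => arrow a (par b (elem w))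
  | arrow a b, arrow c d =>
    if (arrow a b).ord < (arrow c d).ord then arrow c (par (arrow a b) d)
    else if (arrow a b).ord = (arrow c d).ord then arrow (par a c) (par b d)
    else arrow a (par b (arrow c d))

theorem ord_par (x y : Ty Λ) : (x.par y).ord = max x.ord y.ord := by
  induction x, y using par.induct with
  | case1 v w => simp [par, ord]
  | case2 v c d ih => simp_all [par, ord]
  | case3 a b w ih => simp_all [par, ord]
  | case4 a b c d h ih => rw [par, if_pos h]; simp_all [ord]; omega
  | case5 a b c d h1 h2 ih1 ih2 => rw [par, if_neg h1, if_pos h2]; simp_all [ord]; omega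
  | case6 a b c d h1 h2 ih => rw [par, if_neg h1, if_neg h2]; simp_all [ord]; omega

theorem par_elem_elem (v w : List Λ) : (elem v).par (elem w) = elem (v ++ w) := by
  rw [par]

theorem par_arrow_arrow {a b c d : Ty Λ} (h : (arrow a b).ord = (arrow c d).ord) :
    (arrow a b).par (arrow c d) = arrow (a.par c) (b.par d) := by
  rw [par, if_neg (by omega), if_pos h]

theorem par_lt {x c d : Ty Λ} (h : x.ord < (arrow c d).ord) :
    x.par (arrow c d) = arrow c (x.par d) := by
  cases x with
  | elem v => rw [par]
  | arrow a b => rw [par, if_pos h]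

theorem par_gt {a b y : Ty Λ} (h : y.ord < (arrow a b).ord) :
    (arrow a b).par y = arrow a (b.par y) := by
  cases y with
  | elem w => rw [par]
  | arrow c d => rw [par, if_neg (by omega), if_neg (by omega)]

end Ty
namespace HigherOrder

open scoped TensorProduct ComplexOrder

variable {Λ : Type} (dm : Λ → ℕ)

def dimw (w : List Λ) : ℕ := (w.map dm).prod

theorem dimw_append (v w : List Λ) : dimw dm (v ++ w) = dimw dm v * dimw dm w := by
  simp [dimw]

noncomputable def L : Ty Λ → ModuleCat ℂ
  | .elem w => ModuleCat.of ℂ (Matrix (Fin (dimw dm w)) (Fin (dimw dm w)) ℂ)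
  | .arrow a b => ModuleCat.of ℂ (↑(L a) →ₗ[ℂ] ↑(L b))

def toHom {a b : Ty Λ} (M : ↑(L dm (Ty.arrow a b))) : ↑(L dm a) →ₗ[ℂ] ↑(L dm b) := M

def ofHom {a b : Ty Λ} (f : ↑(L dm a) →ₗ[ℂ] ↑(L dm b)) : ↑(L dm (Ty.arrow a b)) := f

def toMat {w : List Λ} (A : ↑(L dm (Ty.elem w))) :
    Matrix (Fin (dimw dm w)) (Fin (dimw dm w)) ℂ := A

def ofMat {w : List Λ} (A : Matrix (Fin (dimw dm w)) (Fin (dimw dm w)) ℂ) :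
    ↑(L dm (Ty.elem w)) := A

noncomputable def app {a b : Ty Λ} (M : ↑(L dm (Ty.arrow a b))) (ρ : ↑(L dm a)) : ↑(L dm b) :=
  toHom dm M ρ

instance instFinDimL (x : Ty Λ) : FiniteDimensional ℂ ↑(L dm x) := by
  induction x with
  | elem w => exact inferInstanceAs (FiniteDimensional ℂ (Matrix _ _ ℂ))
  | arrow a b iha ihb => exact inferInstanceAs (FiniteDimensional ℂ (↑(L dm a) →ₗ[ℂ] ↑(L dm b)))

noncomputable def castL {x y : Ty Λ} (h : x = y) : ↑(L dm x) ≃ₗ[ℂ] ↑(L dm y) :=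
  h ▸ LinearEquiv.refl ℂ ↑(L dm x)

/-- `L (arrow a b)` is (by definition) a space of linear maps. -/
noncomputable def homEquivL (a b : Ty Λ) :
    ↑(L dm (Ty.arrow a b)) ≃ₗ[ℂ] (↑(L dm a) →ₗ[ℂ] ↑(L dm b)) :=
  { toFun := toHom dm, invFun := ofHom dm, map_add' := fun _ _ => rfl,
    map_smul' := fun _ _ => rfl, left_inv := fun _ => rfl, right_inv := fun _ => rfl }

/-- `L (elem w)` is (by definition) a space of matrices. -/
noncomputable def matEquivL (w : List Λ) :
    ↑(L dm (Ty.elem w)) ≃ₗ[ℂ] Matrix (Fin (dimw dm w)) (Fin (dimw dm w)) ℂ :=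
  { toFun := toMat dm, invFun := ofMat dm, map_add' := fun _ _ => rfl,
    map_smul' := fun _ _ => rfl, left_inv := fun _ => rfl, right_inv := fun _ => rfl }

/-- The parallel product on the level of spaces: the canonical identification of
`L x ⊗ L y` with `L (x ⊛ y)`. -/
noncomputable def parEquiv : (x y : Ty Λ) →
    (↑(L dm x) ⊗[ℂ] ↑(L dm y)) ≃ₗ[ℂ] ↑(L dm (x.par y))
  | .elem v, .elem w =>
      (TensorProduct.congr (matEquivL dm v) (matEquivL dm w)) ≪≫ₗ
      ((Matrix.stdBasis ℂ (Fin (dimw dm v)) (Fin (dimw dm v))).tensorProduct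
          (Matrix.stdBasis ℂ (Fin (dimw dm w)) (Fin (dimw dm w)))).equiv
        (Matrix.stdBasis ℂ (Fin (dimw dm v) × Fin (dimw dm w))
          (Fin (dimw dm v) × Fin (dimw dm w)))
        (Equiv.prodProdProdComm _ _ _ _) ≪≫ₗ
      Matrix.reindexLinearEquiv ℂ ℂ finProdFinEquiv finProdFinEquiv ≪≫ₗ
      Matrix.reindexLinearEquiv ℂ ℂ (finCongr (dimw_append dm v w).symm)
        (finCongr (dimw_append dm v w).symm) ≪≫ₗ
      (matEquivL dm (v ++ w)).symm ≪≫ₗ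
      castL dm (Ty.par_elem_elem v w).symm
  | .elem v, .arrow c d =>
      (TensorProduct.congr (LinearEquiv.refl ℂ _) (homEquivL dm c d)) ≪≫ₗ
      lTensorHomEquivHomLTensor ℂ ↑(L dm c) ↑(L dm (Ty.elem v)) ↑(L dm d) ≪≫ₗ
      LinearEquiv.arrowCongr (LinearEquiv.refl ℂ _) (parEquiv (Ty.elem v) d) ≪≫ₗ
      (homEquivL dm c ((Ty.elem v).par d)).symm ≪≫ₗ
      castL dm (Ty.par_lt (by simp [Ty.ord])).symm
  | .arrow a b, .elem w =>
      (TensorProduct.congr (homEquivL dm a b) (LinearEquiv.refl ℂ _)) ≪≫ₗ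
      rTensorHomEquivHomRTensor ℂ ↑(L dm a) ↑(L dm b) ↑(L dm (Ty.elem w)) ≪≫ₗ
      LinearEquiv.arrowCongr (LinearEquiv.refl ℂ _) (parEquiv b (Ty.elem w)) ≪≫ₗ
      (homEquivL dm a (b.par (Ty.elem w))).symm ≪≫ₗ
      castL dm (Ty.par_gt (by simp [Ty.ord])).symm
  | .arrow a b, .arrow c d =>
      if h : (Ty.arrow a b).ord < (Ty.arrow c d).ord then
        (TensorProduct.congr (LinearEquiv.refl ℂ _) (homEquivL dm c d)) ≪≫ₗ
        lTensorHomEquivHomLTensor ℂ ↑(L dm c) ↑(L dm (Ty.arrow a b)) ↑(L dm d) ≪≫ₗ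
        LinearEquiv.arrowCongr (LinearEquiv.refl ℂ _) (parEquiv (Ty.arrow a b) d) ≪≫ₗ
        (homEquivL dm c ((Ty.arrow a b).par d)).symm ≪≫ₗ
        castL dm (Ty.par_lt h).symm
      else if h2 : (Ty.arrow a b).ord = (Ty.arrow c d).ord then
        (TensorProduct.congr (homEquivL dm a b) (homEquivL dm c d)) ≪≫ₗ
        homTensorHomEquiv ℂ ↑(L dm a) ↑(L dm c) ↑(L dm b) ↑(L dm d) ≪≫ₗ
        LinearEquiv.arrowCongr (parEquiv a c) (parEquiv b d) ≪≫ₗ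
        (homEquivL dm (a.par c) (b.par d)).symm ≪≫ₗ
        castL dm (Ty.par_arrow_arrow h2).symm
      else
        (TensorProduct.congr (homEquivL dm a b) (LinearEquiv.refl ℂ _)) ≪≫ₗ
        rTensorHomEquivHomRTensor ℂ ↑(L dm a) ↑(L dm b) ↑(L dm (Ty.arrow c d)) ≪≫ₗ
        LinearEquiv.arrowCongr (LinearEquiv.refl ℂ _) (parEquiv b (Ty.arrow c d)) ≪≫ₗ
        (homEquivL dm a (b.par (Ty.arrow c d))).symm ≪≫ₗ
        castL dm (Ty.par_gt (by omega)).symm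

/-- The parallel product of higher-order maps. -/
noncomputable def parMap {x y : Ty Λ} (M : ↑(L dm x)) (N : ↑(L dm y)) : ↑(L dm (x.par y)) :=
  parEquiv dm x y (M ⊗ₜ[ℂ] N)

/-- The identity map, as an element of `L (z → z)`. -/
noncomputable def idL (z : Ty Λ) : ↑(L dm (Ty.arrow z z)) :=
  ofHom dm (LinearMap.id)

/-- The family of sets of Hermitian / Hs-preserving maps. -/
noncomputable def Hs : (x : Ty Λ) → Set ↑(L dm x)
  | .elem w => {A | (toMat dm A).IsHermitian}
  | .arrow a b => {M | ∀ ρ ∈ Hs a, app dm M ρ ∈ Hs b}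

/-- The family of cones of positive semidefinite / completely K-preserving maps. -/
noncomputable def K : (x : Ty Λ) → Set ↑(L dm x)
  | .elem _ => {A | (toMat dm A).PosSemidef}
  | .arrow a b => {M | ∀ z : Ty Λ, ∀ hz : (Ty.arrow z z).ord = (Ty.arrow a b).ord,
      ∀ ρ ∈ K (a.par z),
        app dm (castL dm (Ty.par_arrow_arrow hz.symm) (parMap dm M (idL dm z))) ρ ∈ K (b.par z)}
  termination_by x => x.ord
  decreasing_by
  all_goals (simp only [Ty.ord_par, Ty.ord] at hz ⊢; omega)

end HigherOrder


open scoped ComplexOrder Kronecker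
open Matrix

namespace HOaux

variable {p q κ : Type} [Fintype p] [DecidableEq p] [Fintype q] [DecidableEq q]

/-- The Choi linear map of a matrix map. -/
noncomputable def choiFun (Φ : Matrix p p ℂ →ₗ[ℂ] Matrix q q ℂ) :
    Matrix (p × q) (p × q) ℂ :=
  Matrix.of fun ik jl => Φ (Matrix.single ik.1 jl.1 1) ik.2 jl.2

theorem apply_eq_sum (Φ : Matrix p p ℂ →ₗ[ℂ] Matrix q q ℂ) (X : Matrix p p ℂ) (k l : q) :
    Φ X k l = ∑ i, ∑ j, X i j * Φ (Matrix.single i j 1) k l := by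
  conv_lhs => rw [matrix_eq_sum_single X]
  rw [map_sum, Matrix.sum_apply]
  refine Finset.sum_congr rfl fun i _ => ?_
  rw [map_sum, Matrix.sum_apply]
  refine Finset.sum_congr rfl fun j _ => ?_
  rw [show Matrix.single i j (X i j) = X i j • Matrix.single i j 1 by
    rw [smul_single, smul_eq_mul, mul_one], _root_.map_smul, Matrix.smul_apply, smul_eq_mul]

/-- Choi as a linear equivalence. -/
noncomputable def choi : (Matrix p p ℂ →ₗ[ℂ] Matrix q q ℂ) ≃ₗ[ℂ] Matrix (p × q) (p × q) ℂ where
  toFun := choiFun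
  map_add' Φ Ψ := by ext ⟨i,k⟩ ⟨j,l⟩; simp [choiFun]
  map_smul' c Φ := by ext ⟨i,k⟩ ⟨j,l⟩; simp [choiFun]
  invFun C :=
    { toFun := fun X => Matrix.of fun k l => ∑ i, ∑ j, X i j * C (i, k) (j, l)
      map_add' := fun X Y => by
        ext k l
        simp [Finset.sum_add_distrib, add_mul]
      map_smul' := fun c X => by
        ext k l
        simp [Finset.mul_sum, mul_assoc] }
  left_inv Φ := by
    ext X k l
    exact (apply_eq_sum Φ X k l).symm
  right_inv C := by
    ext ⟨i,k⟩ ⟨j,l⟩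
    simp [choiFun, Matrix.single, Matrix.of_apply, ite_and]
end HOaux

namespace HOaux

variable {p q κ : Type} [Fintype p] [DecidableEq p] [Fintype q] [DecidableEq q]

theorem posSemidef_sum {ι n : Type} [Fintype n] (s : Finset ι) (f : ι → Matrix n n ℂ)
    (h : ∀ i ∈ s, (f i).PosSemidef) : (∑ i ∈ s, f i).PosSemidef := by
  classical
  induction s using Finset.induction_on with
  | empty => exact ⟨Matrix.isHermitian_zero, by simp [Matrix.PosSemidef]⟩
  | insert _ _ hni ih =>
    rw [Finset.sum_insert hni]
    exact ((h _ (Finset.mem_insert_self _ _)).add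
      (ih fun i hi => h i (Finset.mem_insert_of_mem hi)))

/-- Extension of a matrix map by the identity on a factor `κ`. -/
noncomputable def matExt (Φ : Matrix p p ℂ →ₗ[ℂ] Matrix q q ℂ) :
    Matrix (p × κ) (p × κ) ℂ →ₗ[ℂ] Matrix (q × κ) (q × κ) ℂ where
  toFun X := Matrix.of fun ks lt => Φ (Matrix.of fun i j => X (i, ks.2) (j, lt.2)) ks.1 lt.1
  map_add' X Y := by
    ext ⟨k, s⟩ ⟨l, t⟩
    have h1 : (Matrix.of fun i j => X (i, s) (j, t) + Y (i, s) (j, t)) =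
        (Matrix.of fun i j => X (i, s) (j, t)) + (Matrix.of fun i j => Y (i, s) (j, t)) := rfl
    simp only [Matrix.of_apply, Matrix.add_apply, h1, map_add]
  map_smul' c X := by
    ext ⟨k, s⟩ ⟨l, t⟩
    have h2 : (Matrix.of fun i j => c * X (i, s) (j, t)) =
        c • (Matrix.of fun i j => X (i, s) (j, t)) := rfl
    simp only [Matrix.of_apply, Matrix.smul_apply, smul_eq_mul, h2, _root_.map_smul,
      RingHom.id_apply]

theorem matExt_apply (Φ : Matrix p p ℂ →ₗ[ℂ] Matrix q q ℂ) (X : Matrix (p × κ) (p × κ) ℂ)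
    (k : q) (s : κ) (l : q) (t : κ) :
    matExt Φ X (k, s) (l, t) = Φ (Matrix.of fun i j => X (i, s) (j, t)) k l := rfl

theorem matExt_kron (Φ : Matrix p p ℂ →ₗ[ℂ] Matrix q q ℂ) [Fintype κ]
    (A : Matrix p p ℂ) (C : Matrix κ κ ℂ) :
    matExt Φ (A ⊗ₖ C) = (Φ A) ⊗ₖ C := by
  ext ⟨k, s⟩ ⟨l, t⟩
  rw [matExt_apply]
  have : (Matrix.of fun i j => (A ⊗ₖ C) (i, s) (j, t)) = C s t • A := by
    ext i j; simp [Matrix.kroneckerMap_apply, mul_comm]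
  rw [this, _root_.map_smul, Matrix.smul_apply, smul_eq_mul, mul_comm,
    Matrix.kroneckerMap_apply]

open scoped MatrixOrder in
/-- Choi's theorem, easy direction of use: positive Choi matrix gives complete positivity. -/
theorem choi1 [Fintype κ] {Φ : Matrix p p ℂ →ₗ[ℂ] Matrix q q ℂ}
    (hC : (choiFun Φ).PosSemidef) {X : Matrix (p × κ) (p × κ) ℂ} (hX : X.PosSemidef) :
    (matExt Φ X).PosSemidef := by
  classical
  obtain ⟨B, hB⟩ := CStarAlgebra.nonneg_iff_eq_star_mul_self.mp hC.nonneg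
  rw [star_eq_conjTranspose] at hB
  set N : (p × q) → Matrix (q × κ) (p × κ) ℂ := fun r =>
    Matrix.of fun ks is' => if ks.2 = is'.2 then star (B r (is'.1, ks.1)) else 0 with hN
  have tri : ∀ (A Bm : Matrix (q × κ) (p × κ) ℂ) (i j : q × κ),
      (A * X * Bmᴴ) i j = ∑ u, ∑ v, A i u * (X u v * star (Bm j v)) := by
    intro A Bm i j
    rw [Matrix.mul_apply]
    simp_rw [Matrix.mul_apply, Matrix.conjTranspose_apply, Finset.sum_mul, mul_assoc]
    exact Finset.sum_comm
  have entry : ∀ (r : p × q) (k : q) (s : κ) (l : q) (t : κ),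
      (N r * X * (N r)ᴴ) (k, s) (l, t)
        = ∑ i, ∑ j, star (B r (i, k)) * X (i, s) (j, t) * B r (j, l) := by
    intro r k s l t
    rw [tri]
    rw [Fintype.sum_prod_type]
    refine Finset.sum_congr rfl fun i _ => ?_
    rw [Finset.sum_eq_single s]
    · rw [Fintype.sum_prod_type]
      refine Finset.sum_congr rfl fun j _ => ?_
      rw [Finset.sum_eq_single t]
      · simp [hN, mul_assoc]
      · intro b _ hb
        simp [hN, Ne.symm hb]
      · intro h; exact absurd (Finset.mem_univ t) h
    · intro b _ hb
      simp [hN, Ne.symm hb]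
    · intro h; exact absurd (Finset.mem_univ s) h
  have hBB : ∀ (i j : p) (k l : q), Φ (Matrix.single i j 1) k l
      = ∑ r : p × q, star (B r (i, k)) * B r (j, l) := by
    intro i j k l
    have h0 : Φ (Matrix.single i j 1) k l = choiFun Φ (i, k) (j, l) := rfl
    rw [h0, hB, Matrix.mul_apply]
    refine Finset.sum_congr rfl fun r _ => ?_
    rw [Matrix.conjTranspose_apply]
  have key : matExt Φ X = ∑ r : p × q, N r * X * (N r)ᴴ := by
    ext ⟨k, s⟩ ⟨l, t⟩
    rw [matExt_apply, apply_eq_sum, Matrix.sum_apply]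
    simp_rw [entry, Matrix.of_apply, hBB, Finset.mul_sum]
    have swap3 : ∀ F : p → p → (p × q) → ℂ,
        ∑ i, ∑ j, ∑ r, F i j r = ∑ r, ∑ i, ∑ j, F i j r := by
      intro F
      calc ∑ i, ∑ j, ∑ r, F i j r = ∑ i, ∑ r, ∑ j, F i j r :=
            Finset.sum_congr rfl fun i _ => Finset.sum_comm
        _ = ∑ r, ∑ i, ∑ j, F i j r := Finset.sum_comm
    rw [swap3]
    refine Finset.sum_congr rfl fun r _ => ?_
    refine Finset.sum_congr rfl fun i _ => ?_
    refine Finset.sum_congr rfl fun j _ => ?_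
    ring
  rw [key]
  exact posSemidef_sum _ _ fun r _ => hX.mul_mul_conjTranspose_same (N r)

/-- Choi's theorem, converse direction: complete positivity (witnessed on a large enough
auxiliary system) forces the Choi matrix to be positive semidefinite. -/
theorem choi2 [Fintype κ] [DecidableEq κ] {Φ : Matrix p p ℂ →ₗ[ℂ] Matrix q q ℂ}
    (f : p → κ) (hf : Function.Injective f)
    (h : ∀ X : Matrix (p × κ) (p × κ) ℂ, X.PosSemidef → (matExt Φ X).PosSemidef) :
    (choiFun Φ).PosSemidef := by
  classical
  set Ω : (p × κ) → ℂ := fun is => if is.2 = f is.1 then 1 else 0 with hΩ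
  set X : Matrix (p × κ) (p × κ) ℂ := Matrix.of fun u v => Ω u * star (Ω v) with hX
  have hXpsd : X.PosSemidef := by
    refine Matrix.posSemidef_iff_dotProduct_mulVec.mpr ⟨?_, ?_⟩
    · ext u v
      simp only [Matrix.conjTranspose_apply, hX, Matrix.of_apply, star_mul', star_star]
      ring
    · intro x
      set d : ℂ := ∑ v, star (Ω v) * x v with hd
      have hXv : X *ᵥ x = fun u => Ω u * d := by
        ext u
        rw [Matrix.mulVec, dotProduct, hd, Finset.mul_sum]
        refine Finset.sum_congr rfl fun v _ => ?_
        simp only [hX, Matrix.of_apply]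
        ring
      rw [hXv]
      have hsd : star d = ∑ u, star (x u) * Ω u := by
        rw [hd, star_sum]
        refine Finset.sum_congr rfl fun u _ => ?_
        rw [StarMul.star_mul, star_star]
      have : star x ⬝ᵥ (fun u => Ω u * d) = star d * d := by
        rw [dotProduct, hsd, Finset.sum_mul]
        refine Finset.sum_congr rfl fun u _ => ?_
        simp only [Pi.star_apply]
        ring
      rw [this]
      exact star_mul_self_nonneg d
  have hY := h X hXpsd
  have hsub : choiFun Φ = (matExt Φ X).submatrix (fun ik : p × q => (ik.2, f ik.1))
      (fun ik : p × q => (ik.2, f ik.1)) := by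
    ext ⟨i, k⟩ ⟨j, l⟩
    rw [Matrix.submatrix_apply, matExt_apply]
    have : (Matrix.of fun i' j' => X (i', f i) (j', f j)) = Matrix.single i j (1 : ℂ) := by
      ext i' j'
      simp only [hX, Matrix.of_apply, hΩ, Matrix.single]
      by_cases hi : i' = i <;> by_cases hj : j' = j <;>
        simp [hi, hj, hf.eq_iff, Ne.symm, hf.ne_iff, Matrix.of_apply] <;>
        simp [hΩ, hf.eq_iff, hi, hj, Ne.symm hi, Ne.symm hj]
    rw [this]
    rfl
  rw [hsub]
  exact hY.submatrix _

end HOaux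

namespace HigherOrder

open scoped TensorProduct ComplexOrder Kronecker
open Matrix

variable {Λ : Type} (dm : Λ → ℕ)

theorem castL_castL {x y z : Ty Λ} (h1 : x = y) (h2 : y = z) (v : ↑(L dm x)) :
    castL dm h2 (castL dm h1 v) = castL dm (h1.trans h2) v := by
  subst h2; subst h1; rfl

theorem castL_rfl {x : Ty Λ} (h : x = x) (v : ↑(L dm x)) : castL dm h v = v := rfl

theorem mem_K_castL {x y : Ty Λ} (h : x = y) (v : ↑(L dm x)) :
    castL dm h v ∈ K dm y ↔ v ∈ K dm x := by
  subst h; rw [castL_rfl]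

/-- Index types for the matrix picture. -/
def iot : Ty Λ → Type
  | .elem w => Fin (dimw dm w)
  | .arrow a b => iot a × iot b

instance iotFintype : (x : Ty Λ) → Fintype (iot dm x)
  | .elem _ => inferInstanceAs (Fintype (Fin _))
  | .arrow a b => @instFintypeProd _ _ (iotFintype a) (iotFintype b)

instance iotDecEq : (x : Ty Λ) → DecidableEq (iot dm x)
  | .elem _ => inferInstanceAs (DecidableEq (Fin _))
  | .arrow a b => @instDecidableEqProd _ _ (iotDecEq a) (iotDecEq b)

/-- Unit types of every order. -/
def unitTy : ℕ → Ty Λ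
  | 0 => .elem []
  | k + 1 => .arrow (unitTy k) (unitTy k)

theorem ord_unitTy (k : ℕ) : (unitTy (Λ := Λ) k).ord = k := by
  induction k with
  | zero => rfl
  | succ k ih => simp [unitTy, Ty.ord, ih]; omega

instance prodUnique {α β : Type} [ha : Unique α] [hb : Unique β] : Unique (α × β) where
  default := (default, default)
  uniq a := by
    rw [Prod.ext_iff]
    exact ⟨Subsingleton.elim _ _, Subsingleton.elim _ _⟩

instance iotUnitUnique : (k : ℕ) → Unique (iot dm (unitTy k))
  | 0 => Equiv.unique (finCongr (by simp [dimw] : dimw dm ([] : List Λ) = 1))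
  | k + 1 =>
    letI : Unique (iot dm (unitTy k)) := iotUnitUnique k
    inferInstanceAs (Unique (iot dm (unitTy k) × iot dm (unitTy k)))

/-- The global matrix picture of the spaces `L x`. -/
noncomputable def EE : (x : Ty Λ) → (↑(L dm x) ≃ₗ[ℂ] Matrix (iot dm x) (iot dm x) ℂ)
  | .elem w => matEquivL dm w
  | .arrow a b => homEquivL dm a b ≪≫ₗ LinearEquiv.arrowCongr (EE a) (EE b) ≪≫ₗ HOaux.choi

/-- The matrix map associated with a higher-order map. -/
noncomputable def Phi {a b : Ty Λ} (M : ↑(L dm (Ty.arrow a b))) :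
    Matrix (iot dm a) (iot dm a) ℂ →ₗ[ℂ] Matrix (iot dm b) (iot dm b) ℂ :=
  LinearEquiv.arrowCongr (EE dm a) (EE dm b) (toHom dm M)

theorem EE_arrow {a b : Ty Λ} (M : ↑(L dm (Ty.arrow a b))) :
    EE dm (Ty.arrow a b) M = HOaux.choiFun (Phi dm M) := rfl

theorem EE_elem {w : List Λ} (A : ↑(L dm (Ty.elem w))) :
    EE dm (Ty.elem w) A = toMat dm A := rfl

/-- Unfolding lemma: the action of `M ⊛ id_z` on `L (a ⊛ z)` for `z` of matching order. -/
theorem app_parMap_idL (a b z : Ty Λ) (hz : (Ty.arrow z z).ord = (Ty.arrow a b).ord)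
    (M : ↑(L dm (Ty.arrow a b))) (ρ : ↑(L dm (a.par z))) :
    app dm (castL dm (Ty.par_arrow_arrow hz.symm) (parMap dm M (idL dm z))) ρ
      = parEquiv dm b z (TensorProduct.map (toHom dm M) LinearMap.id
          ((parEquiv dm a z).symm ρ)) := by
  have h1 : ¬ ((Ty.arrow a b).ord < (Ty.arrow z z).ord) := by omega
  rw [parMap, parEquiv, dif_neg h1, dif_pos hz.symm]
  simp only [LinearEquiv.trans_apply, TensorProduct.congr_tmul, homTensorHomEquiv_apply,
    TensorProduct.homTensorHomMap_apply, castL_castL, castL_rfl, app]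
  rfl

theorem kron_stdBasisMatrix {p q : Type} [DecidableEq p] [DecidableEq q]
    (i j : p) (k l : q) :
    (Matrix.single i j (1:ℂ)) ⊗ₖ (Matrix.single k l (1:ℂ))
      = Matrix.single (i,k) (j,l) (1:ℂ) := by
  ext ⟨a,b⟩ ⟨c,d⟩
  simp only [Matrix.kroneckerMap_apply, Matrix.single, Matrix.of_apply, Prod.mk.injEq,
    ite_and]
  by_cases h1 : i = a <;> by_cases h2 : k = b <;> by_cases h3 : j = c <;> by_cases h4 : l = d <;>
    simp [h1, h2, h3, h4]


theorem toHom_homEquivL_symm {u v : Ty Λ} (f : ↑(L dm u) →ₗ[ℂ] ↑(L dm v)) :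
    toHom dm ((homEquivL dm u v).symm f) = f := rfl

theorem submatrix_stdBasisMatrix {α β : Type} [DecidableEq α] [DecidableEq β]
    (σ : α ≃ β) (u v : α) :
    (Matrix.single u v (1:ℂ)).submatrix σ.symm σ.symm = Matrix.single (σ u) (σ v) (1:ℂ) := by
  ext a b
  simp only [Matrix.submatrix_apply, Matrix.single, Matrix.of_apply, Equiv.eq_symm_apply]

theorem EE_arrow_entry {c d : Ty Λ} (B : ↑(L dm (Ty.arrow c d))) (i j : iot dm c)
    (k l : iot dm d) :
    EE dm (Ty.arrow c d) B (i, k) (j, l)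
      = EE dm d (toHom dm B ((EE dm c).symm (Matrix.single i j 1))) k l := by
  rw [EE_arrow]
  simp [HOaux.choiFun, Phi, LinearEquiv.arrowCongr_apply]

/-- Core computation for the `ord x < ord (c → d)` cases of `Bthm`. -/
theorem Bcore_lt (x c d : Ty Λ) (σd : iot dm x × iot dm d ≃ iot dm (x.par d))
    (hσd : ∀ (A : ↑(L dm x)) (D : ↑(L dm d)), EE dm (x.par d) (parMap dm A D)
      = ((EE dm x A) ⊗ₖ (EE dm d D)).submatrix σd.symm σd.symm) :
    ∃ σ : iot dm x × (iot dm c × iot dm d) ≃ iot dm c × iot dm (x.par d),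
      ∀ (A : ↑(L dm x)) (B : ↑(L dm (Ty.arrow c d))),
        EE dm (Ty.arrow c (x.par d))
          ((homEquivL dm c (x.par d)).symm
            ((LinearEquiv.arrowCongr (LinearEquiv.refl ℂ ↑(L dm c)) (parEquiv dm x d))
              ((lTensorHomEquivHomLTensor ℂ ↑(L dm c) ↑(L dm x) ↑(L dm d))
                (A ⊗ₜ[ℂ] (homEquivL dm c d) B))))
          = ((EE dm x A) ⊗ₖ (EE dm (Ty.arrow c d) B)).submatrix σ.symm σ.symm := by
  refine ⟨⟨fun p => (p.2.1, σd (p.1, p.2.2)),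
           fun q => ((σd.symm q.2).1, (q.1, (σd.symm q.2).2)), ?_, ?_⟩, ?_⟩
  · intro ⟨k1, i, k2⟩; simp
  · intro ⟨i, u⟩; simp
  intro A B
  ext ⟨i, u⟩ ⟨j, u'⟩
  obtain ⟨⟨k1, k2⟩, rfl⟩ := σd.surjective u
  obtain ⟨⟨k1', k2'⟩, rfl⟩ := σd.surjective u'
  rw [EE_arrow_entry]
  have happ : toHom dm ((homEquivL dm c (x.par d)).symm
        ((LinearEquiv.arrowCongr (LinearEquiv.refl ℂ ↑(L dm c)) (parEquiv dm x d))
          ((lTensorHomEquivHomLTensor ℂ ↑(L dm c) ↑(L dm x) ↑(L dm d))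
            (A ⊗ₜ[ℂ] (homEquivL dm c d) B)))) ((EE dm c).symm (Matrix.single i j 1))
      = parMap dm A (toHom dm B ((EE dm c).symm (Matrix.single i j 1))) := by
    simp only [lTensorHomEquivHomLTensor_apply, LinearEquiv.arrowCongr_apply]
    rfl
  rw [happ, hσd]
  simp only [Matrix.submatrix_apply, Equiv.coe_fn_symm_mk, Equiv.symm_apply_apply,
    Matrix.kroneckerMap_apply]
  erw [Matrix.submatrix_apply, Matrix.kroneckerMap_apply]
  simp only [Equiv.symm_apply_apply]
  rw [EE_arrow_entry]

/-- Core computation for the `ord y < ord (a → b)` cases of `Bthm`. -/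
theorem Bcore_gt (a b y : Ty Λ) (σb : iot dm b × iot dm y ≃ iot dm (b.par y))
    (hσb : ∀ (A : ↑(L dm b)) (D : ↑(L dm y)), EE dm (b.par y) (parMap dm A D)
      = ((EE dm b A) ⊗ₖ (EE dm y D)).submatrix σb.symm σb.symm) :
    ∃ σ : (iot dm a × iot dm b) × iot dm y ≃ iot dm a × iot dm (b.par y),
      ∀ (A : ↑(L dm (Ty.arrow a b))) (B : ↑(L dm y)),
        EE dm (Ty.arrow a (b.par y))
          ((homEquivL dm a (b.par y)).symm
            ((LinearEquiv.arrowCongr (LinearEquiv.refl ℂ ↑(L dm a)) (parEquiv dm b y))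
              ((rTensorHomEquivHomRTensor ℂ ↑(L dm a) ↑(L dm b) ↑(L dm y))
                (((homEquivL dm a b) A) ⊗ₜ[ℂ] B))))
          = ((EE dm (Ty.arrow a b) A) ⊗ₖ (EE dm y B)).submatrix σ.symm σ.symm := by
  refine ⟨⟨fun p => (p.1.1, σb (p.1.2, p.2)),
           fun q => ((q.1, (σb.symm q.2).1), (σb.symm q.2).2), ?_, ?_⟩, ?_⟩
  · intro ⟨⟨i, k1⟩, k2⟩; simp
  · intro ⟨i, u⟩; simp
  intro A B
  ext ⟨i, u⟩ ⟨j, u'⟩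
  obtain ⟨⟨k1, k2⟩, rfl⟩ := σb.surjective u
  obtain ⟨⟨k1', k2'⟩, rfl⟩ := σb.surjective u'
  rw [EE_arrow_entry]
  have happ : toHom dm ((homEquivL dm a (b.par y)).symm
        ((LinearEquiv.arrowCongr (LinearEquiv.refl ℂ ↑(L dm a)) (parEquiv dm b y))
          ((rTensorHomEquivHomRTensor ℂ ↑(L dm a) ↑(L dm b) ↑(L dm y))
            (((homEquivL dm a b) A) ⊗ₜ[ℂ] B)))) ((EE dm a).symm (Matrix.single i j 1))
      = parMap dm (toHom dm A ((EE dm a).symm (Matrix.single i j 1))) B := by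
    simp only [rTensorHomEquivHomRTensor_apply, LinearEquiv.arrowCongr_apply]
    rfl
  rw [happ, hσb]
  simp only [Matrix.submatrix_apply, Equiv.coe_fn_symm_mk, Equiv.symm_apply_apply,
    Matrix.kroneckerMap_apply]
  erw [Matrix.submatrix_apply, Matrix.kroneckerMap_apply]
  simp only [Equiv.symm_apply_apply]
  rw [EE_arrow_entry]

/-- Core computation for the equal-order case of `Bthm`. -/
theorem Bcore_eq (a b c d : Ty Λ)
    (σac : iot dm a × iot dm c ≃ iot dm (a.par c))
    (hσac : ∀ (A : ↑(L dm a)) (C : ↑(L dm c)), EE dm (a.par c) (parMap dm A C)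
      = ((EE dm a A) ⊗ₖ (EE dm c C)).submatrix σac.symm σac.symm)
    (σbd : iot dm b × iot dm d ≃ iot dm (b.par d))
    (hσbd : ∀ (A : ↑(L dm b)) (D : ↑(L dm d)), EE dm (b.par d) (parMap dm A D)
      = ((EE dm b A) ⊗ₖ (EE dm d D)).submatrix σbd.symm σbd.symm) :
    ∃ σ : (iot dm a × iot dm b) × (iot dm c × iot dm d) ≃
        iot dm (a.par c) × iot dm (b.par d),
      ∀ (M : ↑(L dm (Ty.arrow a b))) (N : ↑(L dm (Ty.arrow c d))),
        EE dm (Ty.arrow (a.par c) (b.par d))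
          ((homEquivL dm (a.par c) (b.par d)).symm
            ((LinearEquiv.arrowCongr (parEquiv dm a c) (parEquiv dm b d))
              ((homTensorHomEquiv ℂ ↑(L dm a) ↑(L dm c) ↑(L dm b) ↑(L dm d))
                (((homEquivL dm a b) M) ⊗ₜ[ℂ] ((homEquivL dm c d) N)))))
          = ((EE dm (Ty.arrow a b) M) ⊗ₖ (EE dm (Ty.arrow c d) N)).submatrix σ.symm σ.symm := by
  refine ⟨⟨fun p => (σac (p.1.1, p.2.1), σbd (p.1.2, p.2.2)),
           fun q => (((σac.symm q.1).1, (σbd.symm q.2).1),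
                     ((σac.symm q.1).2, (σbd.symm q.2).2)), ?_, ?_⟩, ?_⟩
  · intro ⟨⟨i, k⟩, ⟨i2, k2⟩⟩; simp
  · intro ⟨u, w⟩; simp
  intro M N
  ext ⟨u, w⟩ ⟨u', w'⟩
  obtain ⟨⟨i, i2⟩, rfl⟩ := σac.surjective u
  obtain ⟨⟨j, j2⟩, rfl⟩ := σac.surjective u'
  obtain ⟨⟨k, k2⟩, rfl⟩ := σbd.surjective w
  obtain ⟨⟨k', k2'⟩, rfl⟩ := σbd.surjective w'
  rw [EE_arrow_entry]
  have hst : (EE dm (a.par c)).symm (Matrix.single (σac (i, i2)) (σac (j, j2)) 1)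
      = parMap dm ((EE dm a).symm (Matrix.single i j 1))
          ((EE dm c).symm (Matrix.single i2 j2 1)) := by
    rw [LinearEquiv.symm_apply_eq, hσac]
    simp only [LinearEquiv.apply_symm_apply]
    rw [kron_stdBasisMatrix, submatrix_stdBasisMatrix]
  have happ : toHom dm ((homEquivL dm (a.par c) (b.par d)).symm
        ((LinearEquiv.arrowCongr (parEquiv dm a c) (parEquiv dm b d))
          ((homTensorHomEquiv ℂ ↑(L dm a) ↑(L dm c) ↑(L dm b) ↑(L dm d))
            (((homEquivL dm a b) M) ⊗ₜ[ℂ] ((homEquivL dm c d) N)))))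
        ((EE dm (a.par c)).symm (Matrix.single (σac (i, i2)) (σac (j, j2)) 1))
      = parMap dm (toHom dm M ((EE dm a).symm (Matrix.single i j 1)))
          (toHom dm N ((EE dm c).symm (Matrix.single i2 j2 1))) := by
    rw [hst, toHom_homEquivL_symm, LinearEquiv.arrowCongr_apply]
    have : (parEquiv dm a c).symm (parMap dm ((EE dm a).symm (Matrix.single i j 1))
        ((EE dm c).symm (Matrix.single i2 j2 1)))
        = ((EE dm a).symm (Matrix.single i j 1)) ⊗ₜ[ℂ] ((EE dm c).symm (Matrix.single i2 j2 1)) := by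
      rw [LinearEquiv.symm_apply_eq]; rfl
    rw [this, homTensorHomEquiv_apply, TensorProduct.homTensorHomMap_apply,
      TensorProduct.map_tmul]
    rfl
  rw [happ, hσbd]
  simp only [Matrix.submatrix_apply, Equiv.coe_fn_symm_mk, Equiv.symm_apply_apply,
    Matrix.kroneckerMap_apply]
  erw [Matrix.submatrix_apply, Matrix.kroneckerMap_apply]
  simp only [Equiv.symm_apply_apply]
  rw [EE_arrow_entry, EE_arrow_entry]

/-- Compatibility of `parEquiv` with the matrix picture: the main structural induction. -/
theorem Bthm : ∀ (x y : Ty Λ) (e : Ty Λ) (h : x.par y = e),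
    ∃ σ : iot dm x × iot dm y ≃ iot dm e,
      ∀ (A : ↑(L dm x)) (B : ↑(L dm y)),
        EE dm e (castL dm h (parMap dm A B)) =
          ((EE dm x A) ⊗ₖ (EE dm y B)).submatrix σ.symm σ.symm := by
  intro x y
  induction x, y using Ty.par.induct with
  | case1 v w =>
    intro e h
    have h2 : Ty.elem (v ++ w) = e := (Ty.par_elem_elem v w).symm.trans h
    subst h2
    refine ⟨finProdFinEquiv.trans (finCongr (dimw_append dm v w).symm), ?_⟩
    have basisPart : ∀ (A : Matrix (Fin (dimw dm v)) (Fin (dimw dm v)) ℂ)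
        (B : Matrix (Fin (dimw dm w)) (Fin (dimw dm w)) ℂ),
        (((Matrix.stdBasis ℂ (Fin (dimw dm v)) (Fin (dimw dm v))).tensorProduct
          (Matrix.stdBasis ℂ (Fin (dimw dm w)) (Fin (dimw dm w)))).equiv
          (Matrix.stdBasis ℂ (Fin (dimw dm v) × Fin (dimw dm w))
            (Fin (dimw dm v) × Fin (dimw dm w)))
          (Equiv.prodProdProdComm _ _ _ _)) (A ⊗ₜ[ℂ] B) = A ⊗ₖ B := by
      have hFG : (((Matrix.stdBasis ℂ (Fin (dimw dm v)) (Fin (dimw dm v))).tensorProduct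
          (Matrix.stdBasis ℂ (Fin (dimw dm w)) (Fin (dimw dm w)))).equiv
          (Matrix.stdBasis ℂ (Fin (dimw dm v) × Fin (dimw dm w))
            (Fin (dimw dm v) × Fin (dimw dm w)))
          (Equiv.prodProdProdComm _ _ _ _)).toLinearMap
          = TensorProduct.lift (Matrix.kroneckerMapBilinear (LinearMap.mul ℂ ℂ)) := by
        apply TensorProduct.ext
        apply (Matrix.stdBasis ℂ (Fin (dimw dm v)) (Fin (dimw dm v))).ext
        intro ij
        apply (Matrix.stdBasis ℂ (Fin (dimw dm w)) (Fin (dimw dm w))).ext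
        intro kl
        simp only [LinearMap.compr₂ₛₗ_apply, TensorProduct.mk_apply, LinearEquiv.coe_coe,
          TensorProduct.lift.tmul]
        rw [← Module.Basis.tensorProduct_apply, Module.Basis.equiv_apply]
        obtain ⟨i, j⟩ := ij
        obtain ⟨k, l⟩ := kl
        rw [Matrix.stdBasis_eq_single, Matrix.stdBasis_eq_single,
          Matrix.stdBasis_eq_single]
        rw [show (Matrix.kroneckerMapBilinear (LinearMap.mul ℂ ℂ)
            (Matrix.single i j (1:ℂ))) (Matrix.single k l (1:ℂ))
            = (Matrix.single i j (1:ℂ)) ⊗ₖ (Matrix.single k l (1:ℂ)) from rfl]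
        rw [kron_stdBasisMatrix]
        rfl
      intro A B
      have := congrArg (fun (f : _ →ₗ[ℂ] _) => f (A ⊗ₜ[ℂ] B)) hFG
      simpa using this
    intro A B
    rw [parMap, parEquiv]
    simp only [LinearEquiv.trans_apply, castL_castL, castL_rfl, TensorProduct.congr_tmul]
    rw [basisPart]
    rw [show (HigherOrder.EE dm (Ty.elem (v ++ w))) ((HigherOrder.matEquivL dm (v ++ w)).symm
      ((Matrix.reindexLinearEquiv ℂ ℂ (finCongr (dimw_append dm v w).symm)
          (finCongr (dimw_append dm v w).symm))
        ((Matrix.reindexLinearEquiv ℂ ℂ finProdFinEquiv finProdFinEquiv)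
          ((matEquivL dm v A) ⊗ₖ (matEquivL dm w B)))))
      = (Matrix.reindexLinearEquiv ℂ ℂ (finCongr (dimw_append dm v w).symm)
          (finCongr (dimw_append dm v w).symm))
        ((Matrix.reindexLinearEquiv ℂ ℂ finProdFinEquiv finProdFinEquiv)
          ((matEquivL dm v A) ⊗ₖ (matEquivL dm w B))) from
      LinearEquiv.apply_symm_apply _ _]
    ext u u'
    simp [Matrix.reindexLinearEquiv_apply, Matrix.reindex_apply, Matrix.submatrix_apply,
      EE_elem, matEquivL, toMat, Equiv.trans, finCongr_symm, finCongr_apply]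
    rfl
  | case2 v c d ih =>
    intro e h
    have h2 : Ty.arrow c ((Ty.elem v).par d) = e :=
      (Ty.par_lt (by simp [Ty.ord])).symm.trans h
    subst h2
    obtain ⟨σd, hσd⟩ := ih ((Ty.elem v).par d) rfl
    simp only [castL_rfl] at hσd
    obtain ⟨σ, hσ⟩ := Bcore_lt dm (Ty.elem v) c d σd hσd
    refine ⟨σ, ?_⟩
    intro A B
    rw [parMap, parEquiv]
    simp only [LinearEquiv.trans_apply, castL_castL, castL_rfl, TensorProduct.congr_tmul,
      LinearEquiv.refl_apply]
    exact hσ A B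
  | case3 a b w ih =>
    intro e h
    have h2 : Ty.arrow a (b.par (Ty.elem w)) = e :=
      (Ty.par_gt (by simp [Ty.ord])).symm.trans h
    subst h2
    obtain ⟨σb, hσb⟩ := ih (b.par (Ty.elem w)) rfl
    simp only [castL_rfl] at hσb
    obtain ⟨σ, hσ⟩ := Bcore_gt dm a b (Ty.elem w) σb hσb
    refine ⟨σ, ?_⟩
    intro A B
    rw [parMap, parEquiv]
    simp only [LinearEquiv.trans_apply, castL_castL, castL_rfl, TensorProduct.congr_tmul,
      LinearEquiv.refl_apply]
    exact hσ A B
  | case4 a b c d hlt ih =>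
    intro e h
    have h2 : Ty.arrow c ((Ty.arrow a b).par d) = e := (Ty.par_lt hlt).symm.trans h
    subst h2
    obtain ⟨σd, hσd⟩ := ih ((Ty.arrow a b).par d) rfl
    simp only [castL_rfl] at hσd
    obtain ⟨σ, hσ⟩ := Bcore_lt dm (Ty.arrow a b) c d σd hσd
    refine ⟨σ, ?_⟩
    intro A B
    rw [parMap, parEquiv, dif_pos hlt]
    simp only [LinearEquiv.trans_apply, castL_castL, castL_rfl, TensorProduct.congr_tmul,
      LinearEquiv.refl_apply]
    exact hσ A B
  | case5 a b c d h1 h2 ih1 ih2 =>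
    intro e h
    have he : Ty.arrow (a.par c) (b.par d) = e := (Ty.par_arrow_arrow h2).symm.trans h
    subst he
    obtain ⟨σac, hσac⟩ := ih1 (a.par c) rfl
    simp only [castL_rfl] at hσac
    obtain ⟨σbd, hσbd⟩ := ih2 (b.par d) rfl
    simp only [castL_rfl] at hσbd
    obtain ⟨σ, hσ⟩ := Bcore_eq dm a b c d σac hσac σbd hσbd
    refine ⟨σ, ?_⟩
    intro A B
    rw [parMap, parEquiv, dif_neg h1, dif_pos h2]
    simp only [LinearEquiv.trans_apply, castL_castL, castL_rfl, TensorProduct.congr_tmul]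
    exact hσ A B
  | case6 a b c d h1 h2 ih =>
    intro e h
    have hgt : (Ty.arrow c d).ord < (Ty.arrow a b).ord := by omega
    have he : Ty.arrow a (b.par (Ty.arrow c d)) = e := (Ty.par_gt hgt).symm.trans h
    subst he
    obtain ⟨σb, hσb⟩ := ih (b.par (Ty.arrow c d)) rfl
    simp only [castL_rfl] at hσb
    obtain ⟨σ, hσ⟩ := Bcore_gt dm a b (Ty.arrow c d) σb hσb
    refine ⟨σ, ?_⟩
    intro A B
    rw [parMap, parEquiv, dif_neg h1, dif_neg h2]
    simp only [LinearEquiv.trans_apply, castL_castL, castL_rfl, TensorProduct.congr_tmul,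
      LinearEquiv.refl_apply]
    exact hσ A B

/-- The structure isomorphism for parallel products, with its defining property. -/
noncomputable def sig (x y : Ty Λ) : iot dm x × iot dm y ≃ iot dm (x.par y) :=
  (Bthm dm x y (x.par y) rfl).choose

theorem sig_spec (x y : Ty Λ) (A : ↑(L dm x)) (B : ↑(L dm y)) :
    EE dm (x.par y) (parMap dm A B)
      = ((EE dm x A) ⊗ₖ (EE dm y B)).submatrix (sig dm x y).symm (sig dm x y).symm := by
  have h := (Bthm dm x y (x.par y) rfl).choose_spec A B
  rwa [castL_rfl] at h

/-- Matrix picture of the action of `f ⊛ id_z`. -/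
theorem TR (x y z : Ty Λ) (f : ↑(L dm x) →ₗ[ℂ] ↑(L dm y)) (ρ : ↑(L dm (x.par z))) :
    EE dm (y.par z) (parEquiv dm y z (TensorProduct.map f LinearMap.id
        ((parEquiv dm x z).symm ρ)))
      = (HOaux.matExt (LinearEquiv.arrowCongr (EE dm x) (EE dm y) f)
          ((EE dm (x.par z) ρ).submatrix (sig dm x z) (sig dm x z))).submatrix
          (sig dm y z).symm (sig dm y z).symm := by
  have main : ∀ t : ↑(L dm x) ⊗[ℂ] ↑(L dm z),
      EE dm (y.par z) (parEquiv dm y z (TensorProduct.map f LinearMap.id t))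
        = (HOaux.matExt (LinearEquiv.arrowCongr (EE dm x) (EE dm y) f)
            ((EE dm (x.par z) (parEquiv dm x z t)).submatrix
              (sig dm x z) (sig dm x z))).submatrix
            (sig dm y z).symm (sig dm y z).symm := by
    intro t
    induction t using TensorProduct.induction_on with
    | zero =>
      simp only [map_zero]
      ext u v
      simp
    | tmul A C =>
      rw [TensorProduct.map_tmul]
      rw [show (parEquiv dm y z) ((f A) ⊗ₜ[ℂ] ((LinearMap.id : ↑(L dm z) →ₗ[ℂ] ↑(L dm z)) C))
          = parMap dm (f A) C from rfl]
      rw [show (parEquiv dm x z) (A ⊗ₜ[ℂ] C) = parMap dm A C from rfl]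
      rw [sig_spec, sig_spec, Matrix.submatrix_submatrix, Equiv.symm_comp_self,
        Matrix.submatrix_id_id, HOaux.matExt_kron]
      rw [show (LinearEquiv.arrowCongr (EE dm x) (EE dm y) f) ((EE dm x) A)
          = EE dm y (f A) by rw [LinearEquiv.arrowCongr_apply, LinearEquiv.symm_apply_apply]]
    | add u v hu hv =>
      simp only [map_add, Matrix.submatrix_add, Pi.add_apply, hu, hv]
  have := main ((parEquiv dm x z).symm ρ)
  rwa [LinearEquiv.apply_symm_apply] at this

theorem Athm_elem (w : List Λ) (A : ↑(L dm (Ty.elem w))) :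
    A ∈ K dm (Ty.elem w) ↔ (EE dm (Ty.elem w) A).PosSemidef := by
  rw [show EE dm (Ty.elem w) A = toMat dm A from rfl]
  simp only [K, Set.mem_setOf_eq]
  exact Iff.rfl

/-- The key order condition bookkeeping. -/
theorem hz_ord {a b z : Ty Λ} (hz : (Ty.arrow z z).ord = (Ty.arrow a b).ord) :
    z.ord = max a.ord b.ord := by
  simp [Ty.ord] at hz; omega

/-- The characterization of the cones `K` by positive semidefiniteness in the matrix
picture. -/
theorem Athm : ∀ (n : ℕ) (x : Ty Λ), x.ord ≤ n → ∀ A : ↑(L dm x),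
    A ∈ K dm x ↔ (EE dm x A).PosSemidef := by
  intro n
  induction n with
  | zero =>
    intro x hx A
    cases x with
    | elem w => exact Athm_elem dm w A
    | arrow a b => simp [Ty.ord] at hx
  | succ n IH =>
    intro x hx A
    cases x with
    | elem w => exact Athm_elem dm w A
    | arrow a b =>
      set M := A with hM
      have hcond : ∀ (z : Ty Λ) (hz : (Ty.arrow z z).ord = (Ty.arrow a b).ord),
          ((∀ ρ ∈ K dm (a.par z),
              app dm (castL dm (Ty.par_arrow_arrow hz.symm) (parMap dm M (idL dm z))) ρ
                ∈ K dm (b.par z)) ↔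
            (∀ X : Matrix (iot dm a × iot dm z) (iot dm a × iot dm z) ℂ, X.PosSemidef →
              (HOaux.matExt (Phi dm M) X).PosSemidef)) := by
        intro z hz
        have hzo := hz_ord hz
        have hao : (a.par z).ord ≤ n := by
          rw [Ty.ord_par]
          simp [Ty.ord] at hx
          omega
        have hbo : (b.par z).ord ≤ n := by
          rw [Ty.ord_par]
          simp [Ty.ord] at hx
          omega
        constructor
        · intro hc X hX
          set ρ := (EE dm (a.par z)).symm
            (X.submatrix (sig dm a z).symm (sig dm a z).symm) with hρdef
          have hρ : ρ ∈ K dm (a.par z) := by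
            rw [IH (a.par z) hao, hρdef, LinearEquiv.apply_symm_apply]
            exact hX.submatrix _
          have h2 := hc ρ hρ
          rw [IH (b.par z) hbo, app_parMap_idL dm a b z hz M ρ, TR] at h2
          have h3 := (Matrix.posSemidef_submatrix_equiv (sig dm b z).symm).mp h2
          rw [hρdef, LinearEquiv.apply_symm_apply, Matrix.submatrix_submatrix,
            Equiv.symm_comp_self, Matrix.submatrix_id_id] at h3
          exact h3
        · intro hmat ρ hρ
          rw [IH (b.par z) hbo, app_parMap_idL dm a b z hz M ρ, TR]
          refine (Matrix.posSemidef_submatrix_equiv (sig dm b z).symm).mpr ?_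
          exact hmat _ (((IH (a.par z) hao ρ).mp hρ).submatrix _)
      constructor
      · intro hK
        rw [EE_arrow]
        simp only [K, Set.mem_setOf_eq] at hK
        set m := max a.ord b.ord with hm
        set z0 := a.par (unitTy m) with hz0def
        have hz0 : (Ty.arrow z0 z0).ord = (Ty.arrow a b).ord := by
          simp [Ty.ord, hz0def, Ty.ord_par, ord_unitTy]
          omega
        have hmext := (hcond z0 hz0).mp (hK z0 hz0)
        refine HOaux.choi2 (fun i => sig dm a (unitTy m) (i, default)) ?_ hmext
        intro i i' hii
        have := (sig dm a (unitTy m)).injective hii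
        exact (Prod.mk.injEq _ _ _ _ ▸ this).1
      · intro hP
        simp only [K, Set.mem_setOf_eq]
        intro z hz ρ hρ
        refine (hcond z hz).mpr (fun X hX => HOaux.choi1 ?_ hX) ρ hρ
        rw [← EE_arrow]
        exact hP

/-- The main lemma: a completely K-preserving map tensored with any identity preserves
the cones, with no restriction on the order of the ancilla. -/
theorem ML (a b z : Ty Λ) (M : ↑(L dm (Ty.arrow a b))) (hM : M ∈ K dm (Ty.arrow a b))
    (ρ : ↑(L dm (a.par z))) (hρ : ρ ∈ K dm (a.par z)) :
    parEquiv dm b z (TensorProduct.map (toHom dm M) LinearMap.id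
      ((parEquiv dm a z).symm ρ)) ∈ K dm (b.par z) := by
  have hchoi : (HOaux.choiFun (Phi dm M)).PosSemidef := by
    have h := (Athm dm (Ty.arrow a b).ord (Ty.arrow a b) le_rfl M).mp hM
    rwa [EE_arrow] at h
  rw [Athm dm (b.par z).ord (b.par z) le_rfl, TR]
  refine (Matrix.posSemidef_submatrix_equiv (sig dm b z).symm).mpr ?_
  exact HOaux.choi1 hchoi
    (((Athm dm (a.par z).ord (a.par z) le_rfl ρ).mp hρ).submatrix _)

end HigherOrder

open HigherOrder in
/-- Completely K-preserving maps are closed under composition. -/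
theorem K_comp {Λ : Type} (dm : Λ → ℕ) (a b c : Ty Λ)
    (M : ↑(L dm (Ty.arrow a b))) (N : ↑(L dm (Ty.arrow b c)))
    (hM : M ∈ K dm (Ty.arrow a b)) (hN : N ∈ K dm (Ty.arrow b c)) :
    ofHom dm ((toHom dm N).comp (toHom dm M)) ∈ K dm (Ty.arrow a c) := by
  simp only [K, Set.mem_setOf_eq]
  intro z hz ρ hρ
  rw [app_parMap_idL dm a c z hz _ ρ]
  rw [show toHom dm (ofHom dm ((toHom dm N).comp (toHom dm M)))
      = (toHom dm N).comp (toHom dm M) from rfl]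
  rw [show TensorProduct.map ((toHom dm N).comp (toHom dm M))
        (LinearMap.id : ↑(L dm z) →ₗ[ℂ] ↑(L dm z))
      = (TensorProduct.map (toHom dm N) LinearMap.id).comp
          (TensorProduct.map (toHom dm M) LinearMap.id) by
    rw [← TensorProduct.map_comp, LinearMap.id_comp]]
  rw [LinearMap.comp_apply]
  rw [show TensorProduct.map (toHom dm M) LinearMap.id ((parEquiv dm a z).symm ρ)
      = (parEquiv dm b z).symm (parEquiv dm b z (TensorProduct.map (toHom dm M)
          LinearMap.id ((parEquiv dm a z).symm ρ)))
    from (LinearEquiv.symm_apply_apply _ _).symm]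
  exact ML dm b c z N hN _ (ML dm a b z M hM ρ hρ)
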